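/- Let l ≥ 2, work in EuclideanSpace ℝ (Fin l) with standard orthonormal basis x₁, …, x_l, set α_i = x_i − x_{i+1} for 1 ≤ i ≤ l−1 and α_l = x_l, and set d₁ = 1 and d_i = 2 for 2 ≤ i ≤ l. For each j let e_j be the unique vector with ⟨e_j, α_i⟩ = δ_{ij}/d_j for all i. Then e₁ = x₁ and e_j = (1/2) Σ_{k=1}^{j} x_k for 2 ≤ j ≤ l, and max_{1≤j≤l} ‖e_j‖² equals 1 if l ≤ 3, and l/4 if l ≥ 4. -/

import Mathlib

open scoped RealInnerProductSpace

/-- (2.9)–(2.10): the vertices `e_j` of the Cartan polyhedron facet for the root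
system `b_l` (simple roots `α_i = x_i − x_{i+1}` for `i < l`, `α_l = x_l`;
coefficients `d₁ = 1`, `d_i = 2` otherwise) and the value of `max_j ‖e_j‖²`.
Indices are zero-based: `i : Fin l` corresponds to `i+1` in the one-based
statement, so `⟪e j, α i⟫ = δ_{ij}/d_j` with `d_j = 1` iff `(j : ℕ) = 0`. -/
theorem stmt6 (l : ℕ) (hl : 2 ≤ l)
    (x : Fin l → EuclideanSpace ℝ (Fin l))
    (hx : ∀ i, x i = EuclideanSpace.single i (1 : ℝ))
    (α : Fin l → EuclideanSpace ℝ (Fin l))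
    (hα : ∀ i : Fin l, α i =
      if h : (i : ℕ) + 1 < l then x i - x ⟨(i : ℕ) + 1, h⟩ else x i)
    (e : Fin l → EuclideanSpace ℝ (Fin l))
    (he : ∀ i j, ⟪e j, α i⟫ =
      if i = j then (if (j : ℕ) = 0 then (1 : ℝ) else 1 / 2) else 0) :
    e ⟨0, by omega⟩ = x ⟨0, by omega⟩ ∧
    (∀ j : Fin l, 1 ≤ (j : ℕ) →
      e j = (1 / 2 : ℝ) •
        ∑ k ∈ Finset.univ.filter (fun k : Fin l => (k : ℕ) ≤ (j : ℕ)), x k) ∧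
    Finset.univ.sup' (Finset.univ_nonempty_iff.mpr ⟨⟨0, by omega⟩⟩)
        (fun j : Fin l => ‖e j‖ ^ 2) =
      if l ≤ 3 then (1 : ℝ) else (l : ℝ) / 4 := by
  -- inner product with x i gives the i-th coordinate
  have hip : ∀ (v : EuclideanSpace ℝ (Fin l)) (i : Fin l), ⟪v, x i⟫ = v i := by
    intro v i
    rw [hx]
    simpa using EuclideanSpace.inner_single_right (𝕜 := ℝ) i 1 v
  -- coordinates of e j
  have key : ∀ (j : Fin l) (n : ℕ) (i : Fin l), (i : ℕ) + n + 1 = l →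
      e j i = if (i : ℕ) ≤ (j : ℕ) then (if (j : ℕ) = 0 then (1:ℝ) else 1/2) else 0 := by
    intro j n
    induction n with
    | zero =>
      intro i hi
      have h1 := he i j
      rw [hα] at h1
      rw [dif_neg (by omega)] at h1
      rw [hip] at h1
      have hij : (i : ℕ) ≤ (j : ℕ) ↔ i = j := by
        constructor
        · intro h; exact Fin.ext (by omega)
        · intro h; omega
      rcases eq_or_ne i j with h | h
      · simp [h1, h, hij]
      · rw [if_neg h] at h1
        rw [h1, if_neg (by rw [hij]; exact h)]
    | succ n ih =>
      intro i hi
      have hlt : (i : ℕ) + 1 < l := by omega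
      have h2 := ih ⟨(i : ℕ) + 1, hlt⟩ (by simp; omega)
      have h1 := he i j
      rw [hα, dif_pos hlt, inner_sub_right, hip, hip] at h1
      rcases eq_or_ne i j with h | h
      · rw [if_pos h] at h1
        subst h
        have : ¬ ((i : ℕ) + 1 ≤ (i : ℕ)) := by omega
        rw [h2] at h1
        simp only [this, if_false] at h1
        rcases Nat.eq_zero_or_pos (i : ℕ) with h0 | h0 <;> simp [h0] at h1 ⊢ <;> linarith
      · rw [if_neg h] at h1
        rw [h2] at h1
        have hij : ((i : ℕ) + 1 ≤ (j : ℕ)) ↔ ((i : ℕ) ≤ (j : ℕ)) := by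
          constructor
          · omega
          · intro hle
            rcases lt_or_eq_of_le hle with h' | h'
            · omega
            · exact absurd (Fin.ext h') h
        by_cases hle : (i : ℕ) ≤ (j : ℕ)
        · rw [if_pos (hij.mpr hle)] at h1
          rw [if_pos hle]; linarith
        · rw [if_neg (fun hh => hle (hij.mp hh))] at h1
          rw [if_neg hle]; linarith
  have key' : ∀ (j i : Fin l),
      e j i = if (i : ℕ) ≤ (j : ℕ) then (if (j : ℕ) = 0 then (1:ℝ) else 1/2) else 0 := by
    intro j i
    exact key j (l - 1 - (i : ℕ)) i (by omega)
  refine ⟨?_, ?_, ?_⟩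
  · ext i
    rw [key', hx]
    simp [Fin.ext_iff, Nat.le_zero, eq_comm]
  · intro j hj
    ext i
    rw [key']
    have : ((1 / 2 : ℝ) • ∑ k ∈ Finset.univ.filter (fun k : Fin l => (k : ℕ) ≤ (j : ℕ)), x k) i
        = (1/2 : ℝ) * ∑ k ∈ Finset.univ.filter (fun k : Fin l => (k : ℕ) ≤ (j : ℕ)), (x k) i := by
      simp only [PiLp.smul_apply, smul_eq_mul, mul_eq_mul_left_iff]
      left
      rw [WithLp.ofLp_sum]
      exact Finset.sum_apply i _ _
    rw [this]
    have hsum : ∑ k ∈ Finset.univ.filter (fun k : Fin l => (k : ℕ) ≤ (j : ℕ)), (x k) i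
        = if (i : ℕ) ≤ (j : ℕ) then (1:ℝ) else 0 := by
      simp only [hx, EuclideanSpace.single_apply]
      rw [Finset.sum_ite_eq]
      simp
    rw [hsum]
    have hj0 : (j : ℕ) ≠ 0 := by omega
    by_cases h : (i : ℕ) ≤ (j : ℕ) <;> simp [h, hj0]
  · -- norms
    have hnorm : ∀ j : Fin l, ‖e j‖ ^ 2 =
        if (j : ℕ) = 0 then (1:ℝ) else ((j : ℕ) + 1) / 4 := by
      intro j
      have h1 : ‖e j‖ ^ 2 = ∑ i : Fin l, (e j i) ^ 2 := by
        rw [EuclideanSpace.norm_eq, Real.sq_sqrt (by positivity)]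
        simp [sq_abs]
      rw [h1]
      have h2 : ∀ i : Fin l, (e j i) ^ 2 =
          if (i : ℕ) ≤ (j : ℕ) then (if (j : ℕ) = 0 then (1:ℝ) else 1/4) else 0 := by
        intro i
        rw [key' j i]
        by_cases h : (i : ℕ) ≤ (j : ℕ) <;> by_cases h0 : (j : ℕ) = 0 <;>
          simp [h, h0] <;> norm_num
      simp_rw [h2]
      rw [Finset.sum_ite, Finset.sum_const, Finset.sum_const_zero, add_zero]
      have hcard : (Finset.univ.filter (fun i : Fin l => (i : ℕ) ≤ (j : ℕ))).card
          = (j : ℕ) + 1 := by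
        have : Finset.univ.filter (fun i : Fin l => (i : ℕ) ≤ (j : ℕ)) = Finset.Iic j := by
          ext i
          simp only [Finset.mem_filter, Finset.mem_univ, true_and, Finset.mem_Iic, Fin.le_def]
        rw [this, Fin.card_Iic]
      rw [hcard, nsmul_eq_mul]
      by_cases h0 : (j : ℕ) = 0
      · rw [if_pos h0, if_pos h0, h0]; norm_num
      · rw [if_neg h0, if_neg h0]; push_cast; ring
    -- compute the sup'
    have hne : (Finset.univ : Finset (Fin l)).Nonempty :=
      Finset.univ_nonempty_iff.mpr ⟨⟨0, by omega⟩⟩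
    by_cases hl3 : l ≤ 3
    · rw [if_pos hl3]
      apply le_antisymm
      · apply Finset.sup'_le
        intro j _
        show ‖e j‖ ^ 2 ≤ 1
        rw [hnorm j]
        by_cases h0 : (j : ℕ) = 0
        · simp [h0]
        · rw [if_neg h0]
          have h1 : (j : ℕ) + 1 ≤ 3 := by have := j.isLt; omega
          have h2 : ((j : ℕ) + 1 : ℝ) ≤ 3 := by exact_mod_cast h1
          linarith
      · have h0 : ‖e (⟨0, by omega⟩ : Fin l)‖ ^ 2 = 1 := by
          rw [hnorm]; simp
        rw [← h0]
        exact Finset.le_sup' (fun j : Fin l => ‖e j‖ ^ 2) (Finset.mem_univ _)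
    · rw [if_neg hl3]
      have hl4 : 4 ≤ l := by omega
      apply le_antisymm
      · apply Finset.sup'_le
        intro j _
        show ‖e j‖ ^ 2 ≤ (l : ℝ) / 4
        rw [hnorm j]
        by_cases h0 : (j : ℕ) = 0
        · rw [if_pos h0]
          have : (4 : ℝ) ≤ (l : ℝ) := by exact_mod_cast hl4
          linarith
        · rw [if_neg h0]
          have h1 : (j : ℕ) + 1 ≤ l := j.isLt
          have h2 : ((j : ℕ) + 1 : ℝ) ≤ (l : ℝ) := by exact_mod_cast h1
          linarith
      · have h0 : ‖e (⟨l - 1, by omega⟩ : Fin l)‖ ^ 2 = (l : ℝ) / 4 := by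
          rw [hnorm]
          rw [if_neg (by simp; omega)]
          have hcast : (((⟨l - 1, by omega⟩ : Fin l) : ℕ) : ℝ) = (l : ℝ) - 1 := by
            simp only [Fin.val_mk]
            have h1 : 1 ≤ l := by omega
            push_cast [h1]
            ring
          rw [hcast]
          ring
        rw [← h0]
        exact Finset.le_sup' (fun j : Fin l => ‖e j‖ ^ 2) (Finset.mem_univ _)
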